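/- Let E be a finite set with |E| = s, let M ≥ 1 be an integer, and let S be a random subset of E such that |S| ≤ min{s, M} almost surely and such that, for every j, conditioned on |S| = j the set S is distributed uniformly over all j-element subsets of E. Let κ = Pr(|S| ≥ 3) and assume κ > 0. Let Δ be a family of 3-element subsets of E, let τ(S) be the number of members of Δ contained in S, and define the estimator ρ = 0 if |S| < 3, and ρ = (1/κ)·(s(s−1)(s−2))/(|S|(|S|−1)(|S|−2))·τ(S) if |S| ≥ 3. Then E[ρ] = |Δ|. -/

import Mathlib

open Finset
open scoped Classical

private lemma choose_id (a b : ℕ) :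
    (a + 3).choose (b + 3) * ((b + 3) * (b + 2) * (b + 1)) =
      a.choose b * ((a + 3) * (a + 2) * (a + 1)) := by
  have h1 := Nat.add_one_mul_choose_eq a b
  have h2 := Nat.add_one_mul_choose_eq (a + 1) (b + 1)
  have h3 := Nat.add_one_mul_choose_eq (a + 2) (b + 2)
  calc (a + 3).choose (b + 3) * ((b + 3) * (b + 2) * (b + 1))
      = ((a + 2 + 1).choose (b + 2 + 1) * (b + 2 + 1)) * ((b + 2) * (b + 1)) := by ring_nf
    _ = ((a + 2 + 1) * (a + 2).choose (b + 2)) * ((b + 2) * (b + 1)) := by rw [← h3]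
    _ = (a + 3) * (((a + 1 + 1).choose (b + 1 + 1) * (b + 1 + 1)) * (b + 1)) := by ring_nf
    _ = (a + 3) * (((a + 1 + 1) * (a + 1).choose (b + 1)) * (b + 1)) := by rw [← h2]
    _ = (a + 3) * ((a + 2) * ((a + 1).choose (b + 1) * (b + 1))) := by ring_nf
    _ = (a + 3) * ((a + 2) * ((a + 1) * a.choose b)) := by rw [h1]
    _ = a.choose b * ((a + 3) * (a + 2) * (a + 1)) := by ring

/-- doc omitted -/
theorem stmt12 {α : Type*} [DecidableEq α] (E : Finset α) (s M : ℕ)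
    (hE : E.card = s) (hM : 1 ≤ M)
    (q : ℕ → ℝ) (hq0 : ∀ j, 0 ≤ q j) (hqsupp : ∀ j, min s M < j → q j = 0)
    (hq1 : ∑ j ∈ Finset.range (s + 1), q j = 1)
    (Δ : Finset (Finset α)) (hΔ : ∀ T ∈ Δ, T ⊆ E ∧ T.card = 3)
    (κ : ℝ) (hκ : κ = ∑ j ∈ Finset.Icc 3 s, q j) (hκpos : 0 < κ) :
    ∑ A ∈ E.powerset, (q A.card / (s.choose A.card : ℝ)) *
      (if A.card < 3 then 0 else
        (1 / κ) * ((s : ℝ) * ((s : ℝ) - 1) * ((s : ℝ) - 2) /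
          ((A.card : ℝ) * ((A.card : ℝ) - 1) * ((A.card : ℝ) - 2))) *
          ((Δ.filter (fun T => T ⊆ A)).card : ℝ))
      = (Δ.card : ℝ) := by
  classical
  have hs3 : 3 ≤ s := by
    by_contra h
    push_neg at h
    have : κ = 0 := by
      rw [hκ, Finset.Icc_eq_empty (by omega), Finset.sum_empty]
    linarith
  obtain ⟨a, rfl⟩ : ∃ a, s = a + 3 := ⟨s - 3, by omega⟩
  set s := a + 3 with hs
  have hκne : κ ≠ 0 := ne_of_gt hκpos
  set F : ℕ → ℝ := fun j => if j < 3 then 0 else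
      q j / (s.choose j : ℝ) * ((1 / κ) * ((s : ℝ) * ((s : ℝ) - 1) * ((s : ℝ) - 2) /
        ((j : ℝ) * ((j : ℝ) - 1) * ((j : ℝ) - 2)))) with hF
  have key : ∀ T ∈ Δ, ∑ A ∈ E.powerset, (if T ⊆ A then F A.card else 0) = 1 := by
    intro T hT
    obtain ⟨hTE, hT3⟩ := hΔ T hT
    have hcardET : (E \ T).card = a := by
      rw [Finset.card_sdiff_of_subset hTE, hE, hT3]
      omega
    rw [← Finset.sum_filter]
    have hbij : ∑ A ∈ E.powerset.filter (fun A => T ⊆ A), F A.card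
        = ∑ B ∈ (E \ T).powerset, F (B.card + 3) := by
      refine Finset.sum_nbij' (fun A => A \ T) (fun B => B ∪ T) ?_ ?_ ?_ ?_ ?_
      · intro A hA
        simp only [Finset.mem_filter, Finset.mem_powerset] at hA ⊢
        exact Finset.sdiff_subset_sdiff hA.1 (le_refl T)
      · intro B hB
        simp only [Finset.mem_filter, Finset.mem_powerset] at hB ⊢
        constructor
        · exact Finset.union_subset (hB.trans Finset.sdiff_subset) hTE
        · exact Finset.subset_union_right
      · intro A hA
        simp only [Finset.mem_filter, Finset.mem_powerset] at hA
        exact Finset.sdiff_union_of_subset hA.2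
      · intro B hB
        simp only [Finset.mem_powerset] at hB
        exact Finset.union_sdiff_cancel_right
          (Finset.sdiff_disjoint.mono_left hB)
      · intro A hA
        simp only [Finset.mem_filter, Finset.mem_powerset] at hA
        have h3A : 3 ≤ A.card := hT3 ▸ Finset.card_le_card hA.2
        have : (A \ T).card = A.card - 3 := by
          rw [Finset.card_sdiff_of_subset hA.2, hT3]
        rw [this]
        congr 1
        omega
    rw [hbij, Finset.sum_powerset, hcardET]
    have hinner : ∀ k ∈ Finset.range (a + 1),
        ∑ B ∈ Finset.powersetCard k (E \ T), F (B.card + 3) = (a.choose k : ℝ) * F (k + 3) := by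
      intro k hk
      rw [Finset.sum_congr rfl (fun B hB => by
        rw [(Finset.mem_powersetCard.1 hB).2]), Finset.sum_const,
        Finset.card_powersetCard, hcardET, nsmul_eq_mul]
    rw [Finset.sum_congr rfl hinner]
    have hterm : ∀ k ∈ Finset.range (a + 1),
        (a.choose k : ℝ) * F (k + 3) = q (k + 3) / κ := by
      intro k hk
      simp only [Finset.mem_range] at hk
      have hkle : k ≤ a := by omega
      have hid := choose_id a k
      have hchoose_ne : ((s.choose (k + 3) : ℕ) : ℝ) ≠ 0 := by
        have : 0 < s.choose (k + 3) := Nat.choose_pos (by omega)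
        exact_mod_cast this.ne'
      have hprod_ne : ((k : ℝ) + 3) * ((k : ℝ) + 2) * ((k : ℝ) + 1) ≠ 0 := by
        positivity
      have hFval : F (k + 3) = q (k + 3) / (s.choose (k + 3) : ℝ) *
          ((1 / κ) * ((s : ℝ) * ((s : ℝ) - 1) * ((s : ℝ) - 2) /
            (((k : ℝ) + 3) * (((k : ℝ) + 3) - 1) * (((k : ℝ) + 3) - 2)))) := by
        rw [hF]
        simp only [show ¬ (k + 3 < 3) by omega, if_false]
        push_cast
        ring_nf
      rw [hFval]
      have hcast : (a.choose k : ℝ) * ((s : ℝ) * ((s : ℝ) - 1) * ((s : ℝ) - 2)) =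
          (s.choose (k + 3) : ℝ) * (((k : ℝ) + 3) * ((k : ℝ) + 2) * ((k : ℝ) + 1)) := by
        have h := congrArg (fun n : ℕ => (n : ℝ)) hid
        push_cast at h
        rw [hs]
        push_cast
        linear_combination -h
      have h1 : ((k : ℝ) + 3) - 1 = (k : ℝ) + 2 := by ring
      have h2 : ((k : ℝ) + 3) - 2 = (k : ℝ) + 1 := by ring
      rw [h1, h2]
      field_simp
      linear_combination q (k + 3) * hcast
    rw [Finset.sum_congr rfl hterm]
    rw [← Finset.sum_div]
    rw [div_eq_one_iff_eq hκne, hκ]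
    rw [show Finset.Icc 3 s = Finset.Ico 3 (s + 1) by rfl, Finset.sum_Ico_eq_sum_range]
    apply Finset.sum_congr
    · congr 1 <;> omega
    · intro k _
      congr 1 <;> omega
  calc ∑ A ∈ E.powerset, (q A.card / (s.choose A.card : ℝ)) *
      (if A.card < 3 then 0 else
        (1 / κ) * ((s : ℝ) * ((s : ℝ) - 1) * ((s : ℝ) - 2) /
          ((A.card : ℝ) * ((A.card : ℝ) - 1) * ((A.card : ℝ) - 2))) *
          ((Δ.filter (fun T => T ⊆ A)).card : ℝ))
      = ∑ A ∈ E.powerset, ∑ T ∈ Δ, (if T ⊆ A then F A.card else 0) := by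
        refine Finset.sum_congr rfl fun A hA => ?_
        rw [← Finset.sum_filter, Finset.sum_const, nsmul_eq_mul]
        rw [hF]
        by_cases h3 : A.card < 3
        · simp [h3]
        · simp only [h3, if_false]
          ring
    _ = ∑ T ∈ Δ, ∑ A ∈ E.powerset, (if T ⊆ A then F A.card else 0) := Finset.sum_comm
    _ = ∑ T ∈ Δ, (1 : ℝ) := Finset.sum_congr rfl key
    _ = (Δ.card : ℝ) := by simp
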